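/- arXiv:1603.05675 — 2 statements merged into one kernel-verified Lean document; each statement's English description precedes it below -/
import Mathlib

section
/- The moment generating function of X ∼ GH(λ, α, β, δ, μ) is M(t) = E[e^{tX}] = e^{μt}·(γ^λ/(α²−(β+t)²)^{λ/2})·K_λ(δ√(α²−(β+t)²))/K_λ(δγ), valid for all t with |β+t| < α, where γ = √(α²−β²). -/
open Real MeasureTheory Filter Asymptotics
open scoped ENNReal NNReal

/-- Modified Bessel function of the first kind of order `ν`. -/
noncomputable def besselI (ν x : ℝ) : ℝ :=
  ∑' k : ℕ, (x / 2) ^ (ν + 2 * (k : ℝ)) / (Real.Gamma (ν + (k : ℝ) + 1) * (Nat.factorial k : ℝ))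

/-- Modified Bessel function of the second kind of order `ν`. -/
noncomputable def besselK (ν x : ℝ) : ℝ :=
  ∫ t in Set.Ioi (0 : ℝ), Real.exp (-x * Real.cosh t) * Real.cosh (ν * t)

/-- Density of the generalized hyperbolic distribution GH(λ, α, β, δ, μ). -/
noncomputable def ghPdf (lam α β δ μ x : ℝ) : ℝ :=
  ((α ^ 2 - β ^ 2) ^ (lam / 2) /
      (Real.sqrt (2 * Real.pi) * α ^ (lam - 1 / 2) * δ ^ lam *
        besselK lam (δ * Real.sqrt (α ^ 2 - β ^ 2)))) *
    Real.exp (β * (x - μ)) * (δ ^ 2 + (x - μ) ^ 2) ^ ((lam - 1 / 2) / 2) *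
    besselK (lam - 1 / 2) (α * Real.sqrt (δ ^ 2 + (x - μ) ^ 2))

/-- Density of the generalized inverse Gaussian distribution GIG(λ, a, b). -/
noncomputable def gigPdf (lam a b x : ℝ) : ℝ :=
  if 0 < x then
    (a / b) ^ (lam / 2) * (1 / (2 * besselK lam (Real.sqrt (a * b)))) *
      x ^ (lam - 1) * Real.exp (-(a * x + b / x) / 2)
  else 0

lemma one_add_sq_div_four_le_cosh (t : ℝ) : 1 + t ^ 2 / 4 ≤ Real.cosh t := by
  rw [← Real.cosh_abs, Real.cosh_eq]
  have h1 : 1 + |t| + |t| ^ 2 / 2 ≤ Real.exp |t| :=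
    Real.quadratic_le_exp_of_nonneg (abs_nonneg t)
  have h2 : -|t| + 1 ≤ Real.exp (-|t|) := Real.add_one_le_exp _
  have : |t| ^ 2 = t ^ 2 := sq_abs t
  nlinarith

lemma cosh_le_exp_abs (x : ℝ) : Real.cosh x ≤ Real.exp |x| := by
  rw [Real.cosh_eq]
  have h1 : Real.exp x ≤ Real.exp |x| := Real.exp_le_exp.2 (le_abs_self x)
  have h2 : Real.exp (-x) ≤ Real.exp |x| := Real.exp_le_exp.2 (neg_le_abs x)
  linarith

lemma besselK_integrable (p : ℝ) {c : ℝ} (hc : 0 < c) :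
    IntegrableOn (fun t => Real.exp (-c * Real.cosh t) * Real.cosh (p * t))
      (Set.Ioi (0 : ℝ)) := by
  have hint : Integrable (fun t : ℝ =>
      (Real.exp (-c) * Real.exp (p ^ 2 / c)) *
        Real.exp (-(c / 4) * (t - 2 * |p| / c) ^ 2)) :=
    (((integrable_exp_neg_mul_sq (by linarith : (0:ℝ) < c / 4)).comp_sub_right
      (2 * |p| / c)).const_mul _)
  refine Integrable.mono' hint.restrict ?_ ?_
  · exact ((Real.continuous_exp.comp (continuous_const.mul Real.continuous_cosh)).mul
      (Real.continuous_cosh.comp (continuous_const.mul continuous_id))).aestronglyMeasurable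
  · refine (ae_restrict_iff' measurableSet_Ioi).2 (Filter.Eventually.of_forall fun t ht => ?_)
    have ht0 : (0:ℝ) < t := ht
    have h1 : Real.cosh (p * t) ≤ Real.exp (|p| * t) := by
      calc Real.cosh (p * t) ≤ Real.exp |p * t| := cosh_le_exp_abs _
      _ = Real.exp (|p| * t) := by rw [abs_mul, abs_of_pos ht0]
    have h2 : Real.exp (-c * Real.cosh t) ≤ Real.exp (-c * (1 + t ^ 2 / 4)) := by
      apply Real.exp_le_exp.2
      have := one_add_sq_div_four_le_cosh t
      nlinarith
    have hpos1 : (0:ℝ) < Real.exp (-c * Real.cosh t) := Real.exp_pos _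
    have hpos2 : (0:ℝ) < Real.cosh (p * t) := Real.cosh_pos _
    rw [Real.norm_eq_abs, abs_of_pos (mul_pos hpos1 hpos2)]
    calc Real.exp (-c * Real.cosh t) * Real.cosh (p * t)
        ≤ Real.exp (-c * (1 + t ^ 2 / 4)) * Real.exp (|p| * t) := by
          exact mul_le_mul h2 h1 hpos2.le (Real.exp_pos _).le
      _ = (Real.exp (-c) * Real.exp (p ^ 2 / c)) *
            Real.exp (-(c / 4) * (t - 2 * |p| / c) ^ 2) := by
          rw [← Real.exp_add, ← Real.exp_add, ← Real.exp_add]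
          congr 1
          have hp2 : |p| ^ 2 = p ^ 2 := sq_abs p
          field_simp
          nlinarith [sq_abs p]

lemma besselK_pos (p : ℝ) {c : ℝ} (hc : 0 < c) : 0 < besselK p c := by
  rw [besselK]
  have hint := besselK_integrable p hc
  refine (setIntegral_pos_iff_support_of_nonneg_ae
    (Filter.Eventually.of_forall fun t =>
      (mul_pos (Real.exp_pos _) (Real.cosh_pos _)).le) hint).2 ?_
  · have : Set.Ioi (0:ℝ) ⊆ Function.support fun t =>
        Real.exp (-c * Real.cosh t) * Real.cosh (p * t) := by
      intro t _
      exact (mul_pos (Real.exp_pos _) (Real.cosh_pos _)).ne'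
    calc (0:ℝ≥0∞) < volume (Set.Ioi (0:ℝ)) := by simp
      _ ≤ _ := by
          exact measure_mono (Set.subset_inter this subset_rfl)

lemma besselK_measurable (p : ℝ) : Measurable fun x => besselK p x := by
  have : StronglyMeasurable fun x : ℝ => besselK p x := by
    apply StronglyMeasurable.integral_prod_right'
      (f := fun q : ℝ × ℝ => Real.exp (-q.1 * Real.cosh q.2) * Real.cosh (p * q.2))
    exact ((Real.continuous_exp.comp ((continuous_fst.neg).mul
      (Real.continuous_cosh.comp continuous_snd))).mul
      (Real.continuous_cosh.comp (continuous_const.mul continuous_snd))).stronglyMeasurable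
  exact this.measurable

lemma lintegral_image_eq_lintegral_abs_deriv_mul' {s : Set ℝ} {f f' : ℝ → ℝ}
    (hs : MeasurableSet s) (hf' : ∀ x ∈ s, HasDerivWithinAt f (f' x) s x)
    (hf : Set.InjOn f s) (g : ℝ → ℝ≥0∞) :
    ∫⁻ x in f '' s, g x = ∫⁻ x in s, ENNReal.ofReal |f' x| * g (f x) := by
  simpa only [ContinuousLinearMap.det_toSpanSingleton] using
    lintegral_image_eq_lintegral_abs_det_fderiv_mul volume hs
      (fun x hx => (hf' x hx).hasFDerivWithinAt) hf g

lemma lintegral_exp_bessel (p : ℝ) {c : ℝ} (hc : 0 < c) :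
    ∫⁻ u : ℝ, ENNReal.ofReal (Real.exp (p * u - c * Real.cosh u))
      = ENNReal.ofReal (2 * besselK p c) := by
  have hsplit : (∫⁻ u : ℝ, ENNReal.ofReal (Real.exp (p * u - c * Real.cosh u)))
      = (∫⁻ u in Set.Iio (0:ℝ), ENNReal.ofReal (Real.exp (p * u - c * Real.cosh u)))
        + ∫⁻ u in Set.Ioi (0:ℝ), ENNReal.ofReal (Real.exp (p * u - c * Real.cosh u)) := by
    rw [← lintegral_union measurableSet_Ioi ((Set.Iic_disjoint_Ioi le_rfl).mono_left Set.Iio_subset_Iic_self)]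
    rw [show Set.Iio (0:ℝ) ∪ Set.Ioi 0 = {(0:ℝ)}ᶜ by
      ext x; simp [lt_or_lt_iff_ne]]
    rw [← setLIntegral_univ (μ := volume)]
    exact (setLIntegral_congr (by simp)).symm
  have hrefl : (∫⁻ u in Set.Iio (0:ℝ), ENNReal.ofReal (Real.exp (p * u - c * Real.cosh u)))
      = ∫⁻ u in Set.Ioi (0:ℝ), ENNReal.ofReal (Real.exp (-(p * u) - c * Real.cosh u)) := by
    have himg : Set.Iio (0:ℝ) = (fun x : ℝ => -x) '' Set.Ioi 0 := by
      ext x; constructor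
      · intro hx; exact ⟨-x, by simpa using hx, by simp⟩
      · rintro ⟨y, hy, rfl⟩; simpa using hy
    rw [himg, lintegral_image_eq_lintegral_abs_deriv_mul' measurableSet_Ioi
      (fun x _ => (hasDerivAt_neg x).hasDerivWithinAt) (fun a _ b _ h => by linarith)]
    refine setLIntegral_congr_fun measurableSet_Ioi (fun x _ => ?_)
    simp [Real.cosh_neg, mul_comm]
  rw [hsplit, hrefl, ← lintegral_add_left]
  · have : ∀ u ∈ Set.Ioi (0:ℝ),
        ENNReal.ofReal (Real.exp (-(p * u) - c * Real.cosh u))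
          + ENNReal.ofReal (Real.exp (p * u - c * Real.cosh u))
        = ENNReal.ofReal (2 * (Real.exp (-c * Real.cosh u) * Real.cosh (p * u))) := by
      intro u _
      rw [← ENNReal.ofReal_add (Real.exp_pos _).le (Real.exp_pos _).le]
      congr 1
      rw [Real.cosh_eq (p*u), sub_eq_add_neg, sub_eq_add_neg, Real.exp_add, Real.exp_add,
        show -(c * Real.cosh u) = -c * Real.cosh u by ring]
      ring
    rw [setLIntegral_congr_fun measurableSet_Ioi this]
    rw [← ofReal_integral_eq_lintegral_ofReal ((besselK_integrable p hc).const_mul 2)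
      (Filter.Eventually.of_forall fun u =>
        mul_nonneg two_pos.le (mul_pos (Real.exp_pos _) (Real.cosh_pos _)).le)]
    rw [besselK, integral_const_mul]
  · fun_prop

lemma lintegral_gig (p : ℝ) {a c : ℝ} (ha : 0 < a) (hc : 0 < c) :
    ∫⁻ w in Set.Ioi (0:ℝ), ENNReal.ofReal (w ^ (p - 1) * Real.exp (-(a * w + c / w) / 2))
      = ENNReal.ofReal (2 * (c / a) ^ (p / 2) * besselK p (Real.sqrt (a * c))) := by
  set s : ℝ := Real.sqrt (c / a) with hs_def
  have hs : 0 < s := Real.sqrt_pos.2 (div_pos hc ha)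
  have hseq : s = Real.sqrt c / Real.sqrt a := by rw [hs_def, Real.sqrt_div hc.le]
  have hac : 0 < Real.sqrt (a * c) := Real.sqrt_pos.2 (mul_pos ha hc)
  have hsa : (0:ℝ) < Real.sqrt a := Real.sqrt_pos.2 ha
  have hsc : (0:ℝ) < Real.sqrt c := Real.sqrt_pos.2 hc
  have has : a * s = Real.sqrt (a * c) := by
    rw [hseq, Real.sqrt_mul ha.le, mul_div_assoc',
      show a * Real.sqrt c / Real.sqrt a = (a / Real.sqrt a) * Real.sqrt c by ring,
      Real.div_sqrt]
  have hcs : c / s = Real.sqrt (a * c) := by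
    rw [hseq, Real.sqrt_mul ha.le, div_div_eq_mul_div, mul_comm c,
      show Real.sqrt a * c / Real.sqrt c = Real.sqrt a * (c / Real.sqrt c) by ring,
      Real.div_sqrt]
  have himg : Set.Ioi (0:ℝ) = (fun u : ℝ => s * Real.exp u) '' Set.univ := by
    ext x; constructor
    · intro hx
      refine ⟨Real.log (x / s), trivial, ?_⟩
      show s * Real.exp (Real.log (x / s)) = x
      rw [Real.exp_log (div_pos hx hs)]; field_simp
    · rintro ⟨u, -, rfl⟩
      exact mul_pos hs (Real.exp_pos u)
  rw [himg, lintegral_image_eq_lintegral_abs_deriv_mul' MeasurableSet.univ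
    (fun u _ => ((Real.hasDerivAt_exp u).const_mul s).hasDerivWithinAt)
    (fun u _ v _ h => Real.exp_injective (mul_left_cancel₀ hs.ne' h))]
  rw [setLIntegral_univ]
  have hpt : ∀ u : ℝ, ENNReal.ofReal |s * Real.exp u|
      * ENNReal.ofReal ((s * Real.exp u) ^ (p - 1)
        * Real.exp (-(a * (s * Real.exp u) + c / (s * Real.exp u)) / 2))
      = ENNReal.ofReal (s ^ p * Real.exp (p * u - Real.sqrt (a * c) * Real.cosh u)) := by
    intro u
    have hse : 0 < s * Real.exp u := mul_pos hs (Real.exp_pos u)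
    rw [← ENNReal.ofReal_mul (abs_nonneg _), abs_of_pos hse]
    congr 1
    have hB : (s * Real.exp u) ^ p = s ^ p * Real.exp (p * u) := by
      rw [Real.mul_rpow hs.le (Real.exp_pos u).le, ← Real.exp_mul, mul_comm u p]
    have hC : -(a * (s * Real.exp u) + c / (s * Real.exp u)) / 2
        = -(Real.sqrt (a * c) * Real.cosh u) := by
      have h1 : c / (s * Real.exp u) = (c / s) * Real.exp (-u) := by
        rw [Real.exp_neg]; field_simp
      rw [h1, hcs, show a * (s * Real.exp u) = (a * s) * Real.exp u by ring, has,
        Real.cosh_eq]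
      ring
    rw [Real.rpow_sub_one hse.ne', hB, hC,
      show p * u - Real.sqrt (a * c) * Real.cosh u
        = p * u + -(Real.sqrt (a * c) * Real.cosh u) by ring, Real.exp_add]
    field_simp
  simp_rw [hpt]
  have hmeas : Measurable fun u : ℝ =>
      ENNReal.ofReal (Real.exp (p * u - Real.sqrt (a * c) * Real.cosh u)) := by fun_prop
  have hsp : ∀ u : ℝ, ENNReal.ofReal (s ^ p * Real.exp (p * u - Real.sqrt (a * c) * Real.cosh u))
      = ENNReal.ofReal (s ^ p)
        * ENNReal.ofReal (Real.exp (p * u - Real.sqrt (a * c) * Real.cosh u)) := fun u =>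
    ENNReal.ofReal_mul (Real.rpow_nonneg hs.le p)
  simp_rw [hsp]
  rw [lintegral_const_mul _ hmeas, lintegral_exp_bessel p hac,
    ← ENNReal.ofReal_mul (Real.rpow_nonneg hs.le p)]
  congr 1
  have : s ^ p = (c / a) ^ (p / 2) := by
    rw [hs_def, Real.sqrt_eq_rpow, ← Real.rpow_mul (div_nonneg hc.le ha.le),
      show 1 / 2 * p = p / 2 by ring]
  rw [this]; ring

lemma gauss_lin_eq {w : ℝ} (hw : 0 < w) (b y : ℝ) :
    Real.exp (b * y - y ^ 2 / (2 * w))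
      = Real.exp (b ^ 2 * w / 2) * Real.exp (-(1 / (2 * w)) * (y - b * w) ^ 2) := by
  rw [← Real.exp_add]
  congr 1
  field_simp
  ring

lemma integrable_gauss_lin {w : ℝ} (hw : 0 < w) (b : ℝ) :
    Integrable (fun y : ℝ => Real.exp (b * y - y ^ 2 / (2 * w))) := by
  have h : Integrable (fun y : ℝ =>
      Real.exp (b ^ 2 * w / 2) * Real.exp (-(1 / (2 * w)) * (y - b * w) ^ 2)) :=
    ((integrable_exp_neg_mul_sq (by positivity : (0:ℝ) < 1 / (2 * w))).comp_sub_right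
      (b * w)).const_mul _
  exact h.congr (Filter.Eventually.of_forall fun y => (gauss_lin_eq hw b y).symm)

lemma integral_gauss_lin {w : ℝ} (hw : 0 < w) (b : ℝ) :
    ∫ y : ℝ, Real.exp (b * y - y ^ 2 / (2 * w))
      = Real.sqrt (2 * π * w) * Real.exp (b ^ 2 * w / 2) := by
  simp_rw [gauss_lin_eq hw b]
  rw [integral_const_mul]
  have : (∫ y : ℝ, Real.exp (-(1 / (2 * w)) * (y - b * w) ^ 2))
      = ∫ y : ℝ, Real.exp (-(1 / (2 * w)) * y ^ 2) :=
    integral_sub_right_eq_self (fun y => Real.exp (-(1 / (2 * w)) * y ^ 2)) (b * w)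
  rw [this, integral_gaussian]
  rw [show π / (1 / (2 * w)) = 2 * π * w by field_simp]
  ring

lemma lintegral_gh_kernel (lam α δ b : ℝ) (hδ : 0 < δ) (hb : |b| < α) :
    ∫⁻ y : ℝ, ENNReal.ofReal (Real.exp (b * y) * (δ ^ 2 + y ^ 2) ^ ((lam - 1/2) / 2)
        * besselK (lam - 1/2) (α * Real.sqrt (δ ^ 2 + y ^ 2)))
      = ENNReal.ofReal (Real.sqrt (2 * π) * α ^ (lam - 1/2) * δ ^ lam
          * (α ^ 2 - b ^ 2) ^ (-(lam / 2)) * besselK lam (δ * Real.sqrt (α ^ 2 - b ^ 2))) := by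
  have hα : 0 < α := lt_of_le_of_lt (abs_nonneg b) hb
  have hα2b : 0 < α ^ 2 - b ^ 2 := by
    have : b ^ 2 < α ^ 2 := by
      rw [← sq_abs b]
      exact pow_lt_pow_left₀ hb (abs_nonneg b) (by norm_num)
    linarith
  have hαν : (0:ℝ) < α ^ (lam - 1/2) := Real.rpow_pos_of_pos hα _
  set ν : ℝ := lam - 1/2 with hν
  -- the two-variable kernel
  set G : ℝ → ℝ → ℝ≥0∞ := fun y w => ENNReal.ofReal ((α ^ ν / 2) * Real.exp (b * y)
    * (w ^ (ν - 1) * Real.exp (-(α ^ 2 * w + (δ ^ 2 + y ^ 2) / w) / 2))) with hG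
  -- claim 1 : pointwise identity
  have claim1 : ∀ y : ℝ, ENNReal.ofReal (Real.exp (b * y) * (δ ^ 2 + y ^ 2) ^ (ν / 2)
      * besselK ν (α * Real.sqrt (δ ^ 2 + y ^ 2)))
      = ∫⁻ w in Set.Ioi (0:ℝ), G y w := by
    intro y
    set q : ℝ := δ ^ 2 + y ^ 2 with hq_def
    have hq : 0 < q := by positivity
    have hsq : Real.sqrt (α ^ 2 * q) = α * Real.sqrt q := by
      rw [Real.sqrt_mul (sq_nonneg α), Real.sqrt_sq hα.le]
    have hgig := lintegral_gig ν (by positivity : (0:ℝ) < α ^ 2) hq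
    rw [hsq] at hgig
    have hsplit : ∀ w : ℝ, G y w = ENNReal.ofReal ((α ^ ν / 2) * Real.exp (b * y))
        * ENNReal.ofReal (w ^ (ν - 1) * Real.exp (-(α ^ 2 * w + q / w) / 2)) := by
      intro w
      rw [hG, ← ENNReal.ofReal_mul (by positivity)]
    simp_rw [hsplit]
    rw [lintegral_const_mul' _ _ ENNReal.ofReal_ne_top, hgig,
      ← ENNReal.ofReal_mul (by positivity)]
    congr 1
    have hαpow : ((α:ℝ) ^ 2) ^ (ν / 2) = α ^ ν := by
      rw [← Real.rpow_natCast α 2, ← Real.rpow_mul hα.le]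
      congr 1
      push_cast
      ring
    have hqpow : (q / α ^ 2) ^ (ν / 2) = q ^ (ν / 2) / α ^ ν := by
      rw [Real.div_rpow hq.le (sq_nonneg α), hαpow]
    rw [hqpow]
    have hKnn : 0 ≤ besselK ν (α * Real.sqrt q) :=
      (besselK_pos ν (by positivity)).le
    field_simp
  -- claim 3 : inner integral over y for fixed w > 0
  have claim3 : ∀ w ∈ Set.Ioi (0:ℝ), (∫⁻ y : ℝ, G y w)
      = ENNReal.ofReal ((α ^ ν / 2) * Real.sqrt (2 * π)
          * (w ^ (lam - 1) * Real.exp (-((α ^ 2 - b ^ 2) * w + δ ^ 2 / w) / 2))) := by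
    intro w hw
    have hw0 : (0:ℝ) < w := hw
    set D : ℝ := (α ^ ν / 2) * w ^ (ν - 1) * Real.exp (-(α ^ 2 * w + δ ^ 2 / w) / 2) with hD
    have hDnn : 0 ≤ D := by positivity
    have hptw : ∀ y : ℝ, G y w = ENNReal.ofReal (D * Real.exp (b * y - y ^ 2 / (2 * w))) := by
      intro y
      simp only [hG, hD]
      congr 1
      rw [show b * y - y ^ 2 / (2 * w) = b * y + (- (y ^ 2 / (2 * w))) by ring, Real.exp_add,
        show -(α ^ 2 * w + (δ ^ 2 + y ^ 2) / w) / 2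
          = -(α ^ 2 * w + δ ^ 2 / w) / 2 + (- (y ^ 2 / (2 * w))) by field_simp; ring,
        Real.exp_add]
      ring
    simp_rw [hptw]
    rw [← ofReal_integral_eq_lintegral_ofReal ((integrable_gauss_lin hw0 b).const_mul D)
      (Filter.Eventually.of_forall fun y => by positivity)]
    rw [integral_const_mul, integral_gauss_lin hw0 b]
    congr 1
    rw [hD, Real.sqrt_mul (by positivity : (0:ℝ) ≤ 2 * π) w, Real.sqrt_eq_rpow w]
    have hwpow : w ^ (ν - 1) * w ^ ((1:ℝ)/2) = w ^ (lam - 1) := by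
      rw [← Real.rpow_add hw0, hν]
      congr 1
      ring
    have hexp : Real.exp (-(α ^ 2 * w + δ ^ 2 / w) / 2) * Real.exp (b ^ 2 * w / 2)
        = Real.exp (-((α ^ 2 - b ^ 2) * w + δ ^ 2 / w) / 2) := by
      rw [← Real.exp_add]
      congr 1
      ring
    calc (α ^ ν / 2) * w ^ (ν - 1) * Real.exp (-(α ^ 2 * w + δ ^ 2 / w) / 2)
        * (Real.sqrt (2 * π) * w ^ ((1:ℝ)/2) * Real.exp (b ^ 2 * w / 2))
        = (α ^ ν / 2) * Real.sqrt (2 * π) * ((w ^ (ν - 1) * w ^ ((1:ℝ)/2))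
            * (Real.exp (-(α ^ 2 * w + δ ^ 2 / w) / 2) * Real.exp (b ^ 2 * w / 2))) := by ring
      _ = _ := by rw [hwpow, hexp]
  -- measurability for the swap
  have hGmeas : AEMeasurable (Function.uncurry G)
      (volume.prod (volume.restrict (Set.Ioi (0:ℝ)))) := by
    apply Measurable.aemeasurable
    apply ENNReal.measurable_ofReal.comp
    fun_prop
  calc ∫⁻ y : ℝ, ENNReal.ofReal (Real.exp (b * y) * (δ ^ 2 + y ^ 2) ^ ((lam - 1/2) / 2)
        * besselK (lam - 1/2) (α * Real.sqrt (δ ^ 2 + y ^ 2)))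
      = ∫⁻ y : ℝ, ∫⁻ w in Set.Ioi (0:ℝ), G y w := by
        refine lintegral_congr fun y => ?_
        exact claim1 y
    _ = ∫⁻ w in Set.Ioi (0:ℝ), ∫⁻ y : ℝ, G y w := lintegral_lintegral_swap hGmeas
    _ = ∫⁻ w in Set.Ioi (0:ℝ), ENNReal.ofReal ((α ^ ν / 2) * Real.sqrt (2 * π)
          * (w ^ (lam - 1) * Real.exp (-((α ^ 2 - b ^ 2) * w + δ ^ 2 / w) / 2))) :=
        setLIntegral_congr_fun measurableSet_Ioi
          claim3
    _ = ENNReal.ofReal ((α ^ ν / 2) * Real.sqrt (2 * π))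
          * ∫⁻ w in Set.Ioi (0:ℝ), ENNReal.ofReal
            (w ^ (lam - 1) * Real.exp (-((α ^ 2 - b ^ 2) * w + δ ^ 2 / w) / 2)) := by
        rw [← lintegral_const_mul' _ _ ENNReal.ofReal_ne_top]
        refine setLIntegral_congr_fun measurableSet_Ioi
          (fun w _ => ?_)
        rw [← ENNReal.ofReal_mul (by positivity)]
    _ = ENNReal.ofReal (Real.sqrt (2 * π) * α ^ (lam - 1/2) * δ ^ lam
          * (α ^ 2 - b ^ 2) ^ (-(lam / 2)) * besselK lam (δ * Real.sqrt (α ^ 2 - b ^ 2))) := by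
        rw [lintegral_gig lam hα2b (by positivity : (0:ℝ) < δ ^ 2),
          ← ENNReal.ofReal_mul (by positivity)]
        congr 1
        have hsq1 : Real.sqrt ((α ^ 2 - b ^ 2) * δ ^ 2) = δ * Real.sqrt (α ^ 2 - b ^ 2) := by
          rw [Real.sqrt_mul hα2b.le, Real.sqrt_sq hδ.le]
          ring
        have hdpow : (δ ^ 2 / (α ^ 2 - b ^ 2)) ^ (lam / 2)
            = δ ^ lam * (α ^ 2 - b ^ 2) ^ (-(lam / 2)) := by
          rw [Real.div_rpow (by positivity) hα2b.le, Real.rpow_neg hα2b.le, div_eq_mul_inv]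
          congr 1
          rw [← Real.rpow_natCast δ 2, ← Real.rpow_mul hδ.le]
          congr 1
          push_cast
          ring
        rw [hsq1, hdpow]
        have hKnn : 0 ≤ besselK lam (δ * Real.sqrt (α ^ 2 - b ^ 2)) :=
          (besselK_pos lam (by positivity)).le
        ring

theorem stmt11 (lam α β δ μ t : ℝ) (hδ : 0 < δ) (hαβ : |β| < α) (ht : |β + t| < α) :
    ∫ x : ℝ, Real.exp (t * x) * ghPdf lam α β δ μ x
      = Real.exp (μ * t) * (Real.sqrt (α ^ 2 - β ^ 2)) ^ lam /
          (α ^ 2 - (β + t) ^ 2) ^ (lam / 2) *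
        (besselK lam (δ * Real.sqrt (α ^ 2 - (β + t) ^ 2)) /
          besselK lam (δ * Real.sqrt (α ^ 2 - β ^ 2))) := by
  have hα : 0 < α := lt_of_le_of_lt (abs_nonneg β) hαβ
  have hγ2 : 0 < α ^ 2 - β ^ 2 := by
    have : β ^ 2 < α ^ 2 := by
      rw [← sq_abs β]
      exact pow_lt_pow_left₀ hαβ (abs_nonneg β) (by norm_num)
    linarith
  have hb2 : 0 < α ^ 2 - (β + t) ^ 2 := by
    have : (β + t) ^ 2 < α ^ 2 := by
      rw [← sq_abs (β + t)]
      exact pow_lt_pow_left₀ ht (abs_nonneg _) (by norm_num)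
    linarith
  have hKγ : 0 < besselK lam (δ * Real.sqrt (α ^ 2 - β ^ 2)) :=
    besselK_pos _ (by positivity)
  have hKb : 0 < besselK lam (δ * Real.sqrt (α ^ 2 - (β + t) ^ 2)) :=
    besselK_pos _ (by positivity)
  set C0 : ℝ := (α ^ 2 - β ^ 2) ^ (lam / 2) /
      (Real.sqrt (2 * Real.pi) * α ^ (lam - 1 / 2) * δ ^ lam *
        besselK lam (δ * Real.sqrt (α ^ 2 - β ^ 2))) with hC0
  have hC0pos : 0 < C0 := by
    rw [hC0]
    have h2π : (0:ℝ) < Real.sqrt (2 * Real.pi) := Real.sqrt_pos.2 (by positivity)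
    positivity
  set f : ℝ → ℝ := fun y => Real.exp ((β + t) * y) * (δ ^ 2 + y ^ 2) ^ ((lam - 1 / 2) / 2)
      * besselK (lam - 1 / 2) (α * Real.sqrt (δ ^ 2 + y ^ 2)) with hf_def
  have hfnn : ∀ y, 0 ≤ f y := by
    intro y
    have hK : 0 < besselK (lam - 1 / 2) (α * Real.sqrt (δ ^ 2 + y ^ 2)) := by
      apply besselK_pos
      have : 0 < Real.sqrt (δ ^ 2 + y ^ 2) := Real.sqrt_pos.2 (by positivity)
      positivity
    rw [hf_def]
    positivity
  have claimA : ∀ x, Real.exp (t * x) * ghPdf lam α β δ μ x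
      = (C0 * Real.exp (μ * t)) * f (x - μ) := by
    intro x
    have hexp : Real.exp (t * x) * Real.exp (β * (x - μ))
        = Real.exp (μ * t) * Real.exp ((β + t) * (x - μ)) := by
      rw [← Real.exp_add, ← Real.exp_add]
      congr 1
      ring
    rw [ghPdf, hf_def, ← hC0]
    calc Real.exp (t * x) * (C0 * Real.exp (β * (x - μ))
          * (δ ^ 2 + (x - μ) ^ 2) ^ ((lam - 1 / 2) / 2)
          * besselK (lam - 1 / 2) (α * Real.sqrt (δ ^ 2 + (x - μ) ^ 2)))
        = (Real.exp (t * x) * Real.exp (β * (x - μ))) * (C0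
            * (δ ^ 2 + (x - μ) ^ 2) ^ ((lam - 1 / 2) / 2)
            * besselK (lam - 1 / 2) (α * Real.sqrt (δ ^ 2 + (x - μ) ^ 2))) := by ring
      _ = _ := by rw [hexp]; ring
  have hfm : AEStronglyMeasurable f volume := by
    have hKm : Measurable fun y : ℝ =>
        besselK (lam - 1 / 2) (α * Real.sqrt (δ ^ 2 + y ^ 2)) :=
      (besselK_measurable _).comp (by fun_prop)
    have h1 : Measurable fun y : ℝ =>
        Real.exp ((β + t) * y) * (δ ^ 2 + y ^ 2) ^ ((lam - 1 / 2) / 2) := by fun_prop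
    exact (h1.mul hKm).aestronglyMeasurable
  have hint : ∫ y : ℝ, f y = Real.sqrt (2 * π) * α ^ (lam - 1 / 2) * δ ^ lam
      * (α ^ 2 - (β + t) ^ 2) ^ (-(lam / 2))
      * besselK lam (δ * Real.sqrt (α ^ 2 - (β + t) ^ 2)) := by
    rw [integral_eq_lintegral_of_nonneg_ae (Filter.Eventually.of_forall hfnn) hfm]
    have := lintegral_gh_kernel lam α δ (β + t) hδ ht
    rw [hf_def]
    simp only []
    rw [this]
    rw [ENNReal.toReal_ofReal (by positivity)]
  calc ∫ x : ℝ, Real.exp (t * x) * ghPdf lam α β δ μ x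
      = ∫ x : ℝ, (C0 * Real.exp (μ * t)) * f (x - μ) := by
        exact integral_congr_ae (Filter.Eventually.of_forall claimA)
    _ = (C0 * Real.exp (μ * t)) * ∫ x : ℝ, f (x - μ) := integral_const_mul _ _
    _ = (C0 * Real.exp (μ * t)) * ∫ y : ℝ, f y := by
        rw [integral_sub_right_eq_self f μ]
    _ = _ := by
        rw [hint, hC0]
        have h2π : (0:ℝ) < Real.sqrt (2 * Real.pi) := Real.sqrt_pos.2 (by positivity)
        have hsqγ : (Real.sqrt (α ^ 2 - β ^ 2)) ^ lam = (α ^ 2 - β ^ 2) ^ (lam / 2) := by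
          rw [Real.sqrt_eq_rpow, ← Real.rpow_mul hγ2.le]
          congr 1
          ring
        have hneg : (α ^ 2 - (β + t) ^ 2) ^ (-(lam / 2))
            = ((α ^ 2 - (β + t) ^ 2) ^ (lam / 2))⁻¹ := Real.rpow_neg hb2.le _
        rw [hsqγ, hneg]
        have hbpow : (0:ℝ) < (α ^ 2 - (β + t) ^ 2) ^ (lam / 2) := Real.rpow_pos_of_pos hb2 _
        have hαpow : (0:ℝ) < α ^ (lam - 1 / 2) := Real.rpow_pos_of_pos hα _
        have hδpow : (0:ℝ) < δ ^ lam := Real.rpow_pos_of_pos hδ _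
        field_simp
end

section
/- The scaled and shifted Student's t density p_t(x) = (Γ((ν+1)/2)/(√(πδ²)Γ(ν/2)))·(1 + (x−μ)²/δ²)^{−(ν+1)/2} satisfies, for every continuously differentiable g with E|((X−μ)²+δ²)g'(X)| < ∞ and E|(X−μ)g(X)| < ∞ where X has density p_t: E[((X−μ)² + δ²)g'(X) − (ν−1)(X−μ)g(X)] = 0, provided g and g' are bounded. -/
open Real MeasureTheory Filter Asymptotics Set

/-- Density of the scaled and shifted Student's t-distribution. -/
noncomputable def studentPdf (ν δ μ x : ℝ) : ℝ :=
  (Real.Gamma ((ν + 1) / 2) / (Real.sqrt (Real.pi * δ ^ 2) * Real.Gamma (ν / 2))) *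
    (1 + (x - μ) ^ 2 / δ ^ 2) ^ (-((ν + 1) / 2))

lemma aux_not (c : ℝ) (hc : 0 < c) (h : ℝ → ℝ) (hh : Integrable h)
    (hev : ∀ᶠ x in atTop, c * x⁻¹ ≤ |h x|) : False := by
  obtain ⟨X₀, hX₀⟩ := eventually_atTop.1 hev
  set X := max X₀ 1 with hXdef
  have hX1 : (1 : ℝ) ≤ X := le_max_right _ _
  have hint : IntegrableOn (fun x => c * x⁻¹) (Ioi X) := by
    refine Integrable.mono' (hh.abs.integrableOn) ?_ ?_
    · exact ((measurable_id.inv).const_mul c).aestronglyMeasurable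
    · rw [ae_restrict_iff' measurableSet_Ioi]
      filter_upwards with x hx
      have hx0 : (0 : ℝ) < x := lt_of_lt_of_le one_pos (hX1.trans hx.le)
      rw [Real.norm_eq_abs, abs_of_nonneg (by positivity)]
      exact hX₀ x ((le_max_left _ _).trans hx.le)
  have h2 : IntegrableOn (fun x : ℝ => x⁻¹) (Ioi X) := by
    have := hint.const_mul c⁻¹
    have h3 : Integrable (fun x : ℝ => x⁻¹) (volume.restrict (Ioi X)) := by
      simpa [← mul_assoc, inv_mul_cancel₀ hc.ne'] using this
    exact h3
  exact not_IntegrableOn_Ioi_inv h2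

lemma limit_zero (μ δ : ℝ) (hδ : 0 < δ) (F h : ℝ → ℝ) (hh : Integrable h) (L : ℝ)
    (hF : Filter.Tendsto F atTop (nhds L))
    (hrel : ∀ x, h x = F x * ((x - μ) / ((x - μ) ^ 2 + δ ^ 2))) : L = 0 := by
  by_contra hL
  have hL' : 0 < |L| := abs_pos.2 hL
  apply aux_not (|L| / 16) (by positivity) h hh
  have h1 : ∀ᶠ x in atTop, |L| / 2 ≤ |F x| :=
    (hF.abs).eventually (eventually_ge_nhds (by linarith))
  filter_upwards [h1, eventually_ge_atTop (2 * |μ|), eventually_ge_atTop (2 * δ),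
    eventually_ge_atTop 1] with x hFx hμx hδx hx1
  have hx0 : (0 : ℝ) < x := lt_of_lt_of_le one_pos hx1
  have hμ1 : μ ≤ |μ| := le_abs_self μ
  have hμ2 : -|μ| ≤ μ := neg_abs_le μ
  have hxμ : x / 2 ≤ x - μ := by linarith
  have hq0 : (0 : ℝ) < (x - μ) ^ 2 + δ ^ 2 := by positivity
  have hq : (x - μ) ^ 2 + δ ^ 2 ≤ 4 * x ^ 2 := by nlinarith
  have hdiv : 1 / (8 * x) ≤ (x - μ) / ((x - μ) ^ 2 + δ ^ 2) := by
    rw [div_le_div_iff₀ (by positivity) hq0]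
    nlinarith
  have habs : |h x| = |F x| * ((x - μ) / ((x - μ) ^ 2 + δ ^ 2)) := by
    rw [hrel, abs_mul, abs_of_nonneg (div_nonneg (by linarith) hq0.le)]
  rw [habs]
  have key : |L| / 2 * (1 / (8 * x)) ≤ |F x| * ((x - μ) / ((x - μ) ^ 2 + δ ^ 2)) :=
    mul_le_mul hFx hdiv (by positivity) (abs_nonneg _)
  have heq : |L| / 16 * x⁻¹ = |L| / 2 * (1 / (8 * x)) := by
    rw [mul_one_div, div_div, div_mul_eq_mul_div, ← div_div, div_eq_div_iff (by norm_num) (by positivity)]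
    field_simp
    ring
  linarith [key]

theorem stmt16 (ν δ μ : ℝ) (hν : 0 < ν) (hδ : 0 < δ) (g : ℝ → ℝ)
    (hg : Differentiable ℝ g)
    (hgbdd : ∃ M, ∀ x, |g x| ≤ M) (hg'bdd : ∃ M, ∀ x, |deriv g x| ≤ M)
    (hint1 : Integrable (fun x => ((x - μ) ^ 2 + δ ^ 2) * deriv g x * studentPdf ν δ μ x))
    (hint2 : Integrable (fun x => (x - μ) * g x * studentPdf ν δ μ x)) :
    ∫ x : ℝ, (((x - μ) ^ 2 + δ ^ 2) * deriv g x - (ν - 1) * (x - μ) * g x) *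
        studentPdf ν δ μ x = 0 := by
  set C : ℝ := Real.Gamma ((ν + 1) / 2) / (Real.sqrt (Real.pi * δ ^ 2) * Real.Gamma (ν / 2))
    with hC
  set F : ℝ → ℝ := fun x => ((x - μ) ^ 2 + δ ^ 2) * g x * studentPdf ν δ μ x with hFdef
  set I : ℝ → ℝ := fun x =>
    (((x - μ) ^ 2 + δ ^ 2) * deriv g x - (ν - 1) * (x - μ) * g x) * studentPdf ν δ μ x
    with hIdef
  have hbpos : ∀ x : ℝ, (0 : ℝ) < 1 + (x - μ) ^ 2 / δ ^ 2 := by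
    intro x; positivity
  have hDF : ∀ x : ℝ, HasDerivAt F (I x) x := by
    intro x
    have hb : HasDerivAt (fun y : ℝ => 1 + (y - μ) ^ 2 / δ ^ 2) (2 * (x - μ) / δ ^ 2) x := by
      have h1 : HasDerivAt (fun y : ℝ => (y - μ) ^ 2) (2 * (x - μ)) x := by
        simpa using ((hasDerivAt_id x).sub_const μ).fun_pow 2
      simpa using (h1.div_const (δ ^ 2)).const_add 1
    have hp : HasDerivAt (fun y : ℝ => studentPdf ν δ μ y)
        (C * (-((ν + 1) / 2) * (1 + (x - μ) ^ 2 / δ ^ 2) ^ (-((ν + 1) / 2) - 1) *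
          (2 * (x - μ) / δ ^ 2))) x := by
      have h0 := (hb.rpow_const (p := -((ν + 1) / 2)) (Or.inl (hbpos x).ne')).const_mul C
      simp only [studentPdf, hC]
      refine h0.congr_deriv ?_
      ring
    have hq : HasDerivAt (fun y : ℝ => (y - μ) ^ 2 + δ ^ 2) (2 * (x - μ)) x := by
      simpa using (((hasDerivAt_id x).sub_const μ).pow 2).add_const (δ ^ 2)
    have hF' := (hq.mul (hg x).hasDerivAt).mul hp
    refine hF'.congr_deriv ?_
    symm
    simp only [hIdef, studentPdf, hC, Pi.mul_apply]
    rw [Real.rpow_sub (hbpos x), Real.rpow_one]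
    have hb0 : (1 + (x - μ) ^ 2 / δ ^ 2) ≠ 0 := (hbpos x).ne'
    field_simp
    ring
  have hIint : Integrable I := by
    have : I = fun x => ((x - μ) ^ 2 + δ ^ 2) * deriv g x * studentPdf ν δ μ x -
        (ν - 1) * ((x - μ) * g x * studentPdf ν δ μ x) := by
      funext x; simp only [hIdef]; ring
    rw [this]
    exact hint1.sub (hint2.const_mul _)
  have hFTC : ∀ x : ℝ, ∫ t in (0 : ℝ)..x, I t = F x - F 0 := fun x =>
    intervalIntegral.integral_eq_sub_of_hasDerivAt (fun t _ => hDF t)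
      (hIint.intervalIntegrable)
  have hTtop : Tendsto F atTop (nhds (F 0 + ∫ t in Set.Ioi (0 : ℝ), I t)) := by
    have h1 := intervalIntegral_tendsto_integral_Ioi 0 hIint.integrableOn tendsto_id
    have h2 : Tendsto (fun x : ℝ => F 0 + ∫ t in (0 : ℝ)..x, I t) atTop
        (nhds (F 0 + ∫ t in Set.Ioi (0 : ℝ), I t)) := tendsto_const_nhds.add h1
    refine h2.congr fun x => ?_
    rw [hFTC x]; ring
  have hTbot : Tendsto F atBot (nhds (F 0 - ∫ t in Set.Iic (0 : ℝ), I t)) := by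
    have h1 := intervalIntegral_tendsto_integral_Iic 0 hIint.integrableOn tendsto_id
    have h2 : Tendsto (fun x : ℝ => F 0 - ∫ t in x..(0 : ℝ), I t) atBot
        (nhds (F 0 - ∫ t in Set.Iic (0 : ℝ), I t)) := tendsto_const_nhds.sub h1
    refine h2.congr fun x => ?_
    rw [intervalIntegral.integral_symm, hFTC x]; ring
  have hq0 : ∀ x : ℝ, ((x - μ) ^ 2 + δ ^ 2) ≠ 0 := fun x => by positivity
  have Ltop : F 0 + ∫ t in Set.Ioi (0 : ℝ), I t = 0 := by
    refine limit_zero μ δ hδ F (fun x => (x - μ) * g x * studentPdf ν δ μ x) hint2 _ hTtop ?_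
    intro x
    simp only [hFdef]
    field_simp
  have Lbot : F 0 - ∫ t in Set.Iic (0 : ℝ), I t = 0 := by
    have hneg : Tendsto (fun x : ℝ => -F (-x)) atTop
        (nhds (-(F 0 - ∫ t in Set.Iic (0 : ℝ), I t))) :=
      (hTbot.comp tendsto_neg_atTop_atBot).neg
    have hh : Integrable (fun x : ℝ => (-x - μ) * g (-x) * studentPdf ν δ μ (-x)) := hint2.comp_neg
    have := limit_zero (-μ) δ hδ (fun x => -F (-x))
        (fun x => (-x - μ) * g (-x) * studentPdf ν δ μ (-x)) hh _ hneg ?_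
    · linarith
    · intro x
      simp only [hFdef]
      have h1 : (-x - μ) ^ 2 = (x - -μ) ^ 2 := by ring
      rw [h1]
      field_simp
      ring
  have hsplit : ∫ x : ℝ, I x = (∫ x in Set.Iic (0 : ℝ), I x) + ∫ x in Set.Ioi (0 : ℝ), I x :=
    (intervalIntegral.integral_Iic_add_Ioi hIint.integrableOn hIint.integrableOn).symm
  show ∫ x : ℝ, I x = 0
  rw [hsplit]
  linarith
end
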